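/- Suppose Q is saturated, i.e. Q = {x ∈ ℤ^d : τ_i(x) ≥ 0 for all i = 1, …, r}. If ε ∈ ℤ^d is an essential point for Q and q ∈ Q, then ε + q is an essential point for Q; consequently the essential set ℰ of Q consists entirely of essential points. -/
import Mathlib


/-- The shift `α + S = {α + s : s ∈ S}` of a set `S ⊆ ℤ^d` by `α ∈ ℤ^d`. -/
def shiftSet {d : ℕ} (α : Fin d → ℤ) (S : Set (Fin d → ℤ)) : Set (Fin d → ℤ) :=
  (α + ·) '' S

/-- An essential point for `Q` is an `ε ∈ ℤ^d` such that whenever `a ∈ Q` satisfies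
`(a + ε + Q) ∩ Q = (ε + Q) ∩ Q`, `a` is a unit of `Q` (i.e. `-a ∈ Q`). -/
def essentialPoint {d : ℕ} (Q : AddSubmonoid (Fin d → ℤ)) (ε : Fin d → ℤ) : Prop :=
  ∀ a ∈ Q, shiftSet (a + ε) (Q : Set (Fin d → ℤ)) ∩ (Q : Set (Fin d → ℤ)) =
      shiftSet ε (Q : Set (Fin d → ℤ)) ∩ (Q : Set (Fin d → ℤ)) → -a ∈ Q

/-- The essential set `ℰ` of `Q`: the `Q`-set generated by the essential points. -/
def essentialSet {d : ℕ} (Q : AddSubmonoid (Fin d → ℤ)) : Set (Fin d → ℤ) :=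
  {x | ∃ ε q, essentialPoint Q ε ∧ q ∈ Q ∧ x = ε + q}

/-- Suppose `Q` is saturated, i.e. `Q = {x : τ_i(x) ≥ 0 ∀ i}`.  If `ε` is an essential
point for `Q` and `q ∈ Q`, then `ε + q` is an essential point for `Q`; consequently the
essential set `ℰ` of `Q` consists entirely of essential points. -/
lemma mem_shiftSet {d : ℕ} {α x : Fin d → ℤ} {S : Set (Fin d → ℤ)} :
    x ∈ shiftSet α S ↔ x - α ∈ S := by
  constructor
  · rintro ⟨s, hs, rfl⟩; simpa using hs
  · intro h; exact ⟨x - α, h, by funext i; simp⟩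

theorem stmt4 {d r : ℕ} (Q : AddSubmonoid (Fin d → ℤ)) (hFG : Q.FG)
    (hgp : AddSubgroup.closure (Q : Set (Fin d → ℤ)) = ⊤)
    (τ : Fin r → ((Fin d → ℤ) →+ ℤ))
    (hτQ : ∀ i, ∀ x ∈ Q, 0 ≤ τ i x)
    (hsat : ∀ x : Fin d → ℤ, x ∈ Q ↔ ∀ i, 0 ≤ τ i x) :
    (∀ ε : Fin d → ℤ, ∀ q ∈ Q, essentialPoint Q ε → essentialPoint Q (ε + q)) ∧
      (∀ x ∈ essentialSet Q, essentialPoint Q x) := by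
  have key : ∀ ε : Fin d → ℤ, ∀ q ∈ Q, essentialPoint Q ε → essentialPoint Q (ε + q) := by
    intro ε q hq hε a ha hset
    apply hε a ha
    ext x
    simp only [Set.mem_inter_iff, mem_shiftSet]
    constructor
    · rintro ⟨h1, h2⟩
      refine ⟨?_, h2⟩
      have hx : x - ε = (x - (a + ε)) + a := by abel
      rw [hx]; exact Q.add_mem h1 ha
    · rintro ⟨h1, h2⟩
      refine ⟨?_, h2⟩
      have hx : x + q ∈ shiftSet (ε + q) (Q : Set (Fin d → ℤ)) ∩ (Q : Set (Fin d → ℤ)) := by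
        rw [Set.mem_inter_iff, mem_shiftSet]
        have he : x + q - (ε + q) = x - ε := by abel
        exact ⟨by rw [he]; exact h1, Q.add_mem h2 hq⟩
      rw [← hset] at hx
      have h3 := hx.1
      rw [mem_shiftSet] at h3
      have he : x + q - (a + (ε + q)) = x - (a + ε) := by abel
      rwa [he] at h3
  refine ⟨key, ?_⟩
  rintro x ⟨ε, q, hε, hq, rfl⟩
  exact key ε q hq hε
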